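/- (Formula for the metric adjoint of the adjoint representation, Equation (16).) Define $\mathrm{ad}_{\mathbb{A}}(X)Z := \mathbb{A}^{-1}\bigl(\,[\mathbb{A}(Z)\,Q_0,\; X^*]\; Q_0^{-1}\,\bigr)$. Then for all $X, Y, Z \in A$, $$\langle [X,Y],\, Z \rangle_{\mathbb{A}} = -\,\langle Y,\, \mathrm{ad}_{\mathbb{A}}(X)\,Z \rangle_{\mathbb{A}}.$$ -/

import Mathlib

/-- Equation (16) of the paper: in a unital complex star algebra with a
tracial linear functional `τ`, a self-adjoint invertible element `Q₀`, and a linear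
bijection (inertia operator) `𝔸`, the operator
`ad_𝔸(X) Z := 𝔸⁻¹ ([𝔸(Z) Q₀, X*] Q₀⁻¹)` is an adjoint of the adjoint representation with
respect to the pairing `⟨X, Y⟩_𝔸 := Re τ (X Q₀ (𝔸 Y)*)`, i.e.
`⟨[X,Y], Z⟩_𝔸 = - ⟨Y, ad_𝔸(X) Z⟩_𝔸`. -/
theorem ad_inertia_adjoint_formula
    {A : Type*} [Ring A] [Algebra ℂ A] [StarRing A] [StarModule ℂ A]
    (τ : A →ₗ[ℂ] ℂ) (hτ : ∀ u v : A, τ (u * v) = τ (v * u))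
    (Q₀ Q₀inv : A) (hQ₀1 : Q₀ * Q₀inv = 1) (hQ₀2 : Q₀inv * Q₀ = 1)
    (hQ₀sa : star Q₀ = Q₀)
    (𝔸 : A ≃ₗ[ℂ] A)
    (pair : A → A → ℝ) (hpair : ∀ X Y : A, pair X Y = (τ (X * Q₀ * star (𝔸 Y))).re)
    (adA : A → A → A)
    (hadA : ∀ X Z : A,
      adA X Z = 𝔸.symm ((𝔸 Z * Q₀ * star X - star X * (𝔸 Z * Q₀)) * Q₀inv)) :
    ∀ X Y Z : A, pair (X * Y - Y * X) Z = - pair Y (adA X Z) := by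
  intro X Y Z
  have hinv : star Q₀inv = Q₀inv := by
    have h : star Q₀inv * Q₀ = 1 := by
      calc star Q₀inv * Q₀ = star Q₀inv * star Q₀ := by rw [hQ₀sa]
        _ = star (Q₀ * Q₀inv) := (star_mul _ _).symm
        _ = 1 := by rw [hQ₀1, star_one]
    calc star Q₀inv = star Q₀inv * (Q₀ * Q₀inv) := by rw [hQ₀1, mul_one]
      _ = (star Q₀inv * Q₀) * Q₀inv := by rw [mul_assoc]
      _ = Q₀inv := by rw [h, one_mul]
  rw [hpair, hpair, hadA, LinearEquiv.apply_symm_apply]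
  set W := star (𝔸 Z) with hW
  have hstar : star ((𝔸 Z * Q₀ * star X - star X * (𝔸 Z * Q₀)) * Q₀inv)
      = Q₀inv * (X * (Q₀ * W) - Q₀ * W * X) := by
    simp [star_sub, star_mul, hQ₀sa, hinv, mul_assoc, mul_sub, hW]
  rw [hstar]
  have hElt : Y * Q₀ * (Q₀inv * (X * (Q₀ * W) - Q₀ * W * X))
      = Y * (X * (Q₀ * W)) - Y * (Q₀ * W * X) := by
    rw [mul_assoc Y Q₀, ← mul_assoc Q₀ Q₀inv, hQ₀1, one_mul, mul_sub]
  rw [hElt]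
  have h1 : τ (Y * (Q₀ * W * X)) = τ (X * Y * (Q₀ * W)) := by
    calc τ (Y * (Q₀ * W * X)) = τ (Y * (Q₀ * W) * X) := congrArg τ (mul_assoc Y (Q₀ * W) X).symm
      _ = τ (X * (Y * (Q₀ * W))) := hτ _ _
      _ = τ (X * Y * (Q₀ * W)) := by rw [mul_assoc]
  have hτeq : τ ((X * Y - Y * X) * Q₀ * W)
      = - τ (Y * (X * (Q₀ * W)) - Y * (Q₀ * W * X)) := by
    have e1 : (X * Y - Y * X) * Q₀ * W = X * Y * (Q₀ * W) - Y * (X * (Q₀ * W)) := by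
      noncomm_ring
    rw [e1, map_sub, map_sub, h1]
    ring
  rw [hτeq, Complex.neg_re]
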